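/- For |z| < min_{P∈Λ\{0}} |P|, the Weierstrass zeta function admits the Laurent/Taylor expansion ζ(z) = 1/z − ∑_{k=1}^∞ s_{k+1} z^{2k+1}, where s_j = ∑'_{P∈Λ} P^{−2j} (and s₁ := 0). More generally its 2n-th derivative satisfies ζ^{(2n)}(z) = (2n)!/z^{2n+1} − ∑_{k=0}^∞ s_{n+k+1} ((2n+2k+1)!/(2k+1)!) z^{2k+1}. -/

import Mathlib

/-- The nonzero lattice point `2mω₁ + 2nω₂` indexed by `(m,n) ≠ (0,0)`. -/
noncomputable def latticePt (ω₁ ω₂ : ℂ) (p : ℤ × ℤ) : ℂ :=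
  2*(p.1 : ℂ)*ω₁ + 2*(p.2 : ℂ)*ω₂

/-- The Weierstrass zeta function of the lattice generated by `2ω₁` and `2ω₂`. -/
noncomputable def wzeta (ω₁ ω₂ z : ℂ) : ℂ :=
  1/z + ∑' p : {p : ℤ × ℤ // p ≠ 0},
    (1/(z - latticePt ω₁ ω₂ p.1) + 1/latticePt ω₁ ω₂ p.1 + z/(latticePt ω₁ ω₂ p.1)^2)

namespace Stmt14Aux

noncomputable def sig (ω₁ ω₂ : ℂ) (j : ℕ) : ℂ :=
  ∑' p : {p : ℤ × ℤ // p ≠ 0}, ((latticePt ω₁ ω₂ p.1)^j)⁻¹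

noncomputable def ac (ω₁ ω₂ : ℂ) (m : ℕ) : ℂ := if 2 ≤ m then sig ω₁ ω₂ (m+1) else 0

variable (ω₁ ω₂ : ℂ)

lemma latticePt_neg (p : ℤ × ℤ) : latticePt ω₁ ω₂ (-p) = -latticePt ω₁ ω₂ p := by
  unfold latticePt
  simp only [Prod.fst_neg, Prod.snd_neg]
  push_cast
  ring

lemma sig_odd {j : ℕ} (hj : Odd j) : sig ω₁ ω₂ j = 0 := by
  let e : {p : ℤ × ℤ // p ≠ 0} ≃ {p : ℤ × ℤ // p ≠ 0} :=
    ⟨fun p => ⟨-p.1, by simpa using p.2⟩, fun p => ⟨-p.1, by simpa using p.2⟩,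
     fun p => by simp, fun p => by simp⟩
  have h1 := (e.tsum_eq (fun p : {p : ℤ × ℤ // p ≠ 0} => ((latticePt ω₁ ω₂ p.1)^j)⁻¹)).symm
  have he : ∀ c : {p : ℤ × ℤ // p ≠ 0}, ((e c : {p : ℤ × ℤ // p ≠ 0}) : ℤ × ℤ) = -(c : ℤ × ℤ) :=
    fun c => rfl
  simp only [he] at h1
  have h2 : ∀ p : {p : ℤ × ℤ // p ≠ 0}, ((latticePt ω₁ ω₂ (-p.1))^j)⁻¹
      = -((latticePt ω₁ ω₂ p.1)^j)⁻¹ := by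
    intro p
    rw [latticePt_neg, hj.neg_pow, inv_neg]
  have h3 : sig ω₁ ω₂ j = - sig ω₁ ω₂ j := by
    conv_lhs => rw [show sig ω₁ ω₂ j = _ from h1, tsum_congr h2, tsum_neg]
    rfl
  linear_combination h3 / 2

lemma summable_cube (hω : 0 < (ω₂ / ω₁).im) :
    Summable fun p : {p : ℤ × ℤ // p ≠ 0} => (‖latticePt ω₁ ω₂ p.1‖^3)⁻¹ := by
  have hω₁ : ω₁ ≠ 0 := by
    rintro rfl
    simp at hω
  have hω₁' : 0 < ‖ω₁‖ := norm_pos_iff.mpr hω₁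
  set τ : UpperHalfPlane := ⟨ω₂ / ω₁, hω⟩ with hτ
  set c : ℝ := 2 * ‖ω₁‖ * EisensteinSeries.r τ with hc
  have hrτ := EisensteinSeries.r_pos τ
  have hc0 : 0 < c := by positivity
  have key : ∀ p : ℤ × ℤ, p ≠ 0 → c * ‖![p.2, p.1]‖ ≤ ‖latticePt ω₁ ω₂ p‖ := by
    intro p hp
    have hx : ![p.2, p.1] ≠ 0 := by
      intro h
      apply hp
      have h0 := congrFun h 0
      have h1 := congrFun h 1
      simp at h0 h1
      exact Prod.ext h1 h0
    have hlat : latticePt ω₁ ω₂ p = (2*ω₁) * ((p.2 : ℂ) * (τ : ℂ) + (p.1 : ℂ)) := by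
      have hcoe : (τ : ℂ) = ω₂ / ω₁ := rfl
      unfold latticePt
      rw [hcoe]
      field_simp
      ring
    have hb := EisensteinSeries.r_mul_max_le τ hx
    simp only [Matrix.cons_val_zero, Matrix.cons_val_one, Matrix.head_cons] at hb
    rw [hlat, norm_mul]
    have h2 : ‖(2 : ℂ) * ω₁‖ = 2 * ‖ω₁‖ := by
      rw [norm_mul]; norm_num
    rw [h2, hc, mul_assoc]
    gcongr
  have h0 : Summable fun x : Fin 2 → ℤ => ‖x‖ ^ (-(3:ℝ)) :=
    EisensteinSeries.summable_one_div_norm_rpow (by norm_num)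
  have h1 : Summable fun x : Fin 2 → ℤ => (‖x‖^(3:ℕ))⁻¹ := by
    refine h0.congr fun x => ?_
    rw [Real.rpow_neg (norm_nonneg _), ← Real.rpow_natCast ‖x‖ 3]
    norm_num
  have hinj : Function.Injective (fun p : {p : ℤ × ℤ // p ≠ 0} => ![p.1.2, p.1.1]) := by
    intro a b h
    have h0 := congrFun h 0
    have h1 := congrFun h 1
    simp at h0 h1
    exact Subtype.ext (Prod.ext h1 h0)
  have h2 : Summable fun p : {p : ℤ × ℤ // p ≠ 0} => (‖![p.1.2, p.1.1]‖^(3:ℕ))⁻¹ :=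
    h1.comp_injective hinj
  refine Summable.of_nonneg_of_le (fun p => by positivity) (fun p => ?_) (h2.mul_left (c^3)⁻¹)
  have hxpos : (0:ℝ) < ‖![p.1.2, p.1.1]‖ := by
    rw [norm_pos_iff]
    intro h
    apply p.2
    have h0 := congrFun h 0
    have h1 := congrFun h 1
    simp at h0 h1
    exact Prod.ext h1 h0
  have hk := key p.1 p.2
  have hlb : 0 < c * ‖![p.1.2, p.1.1]‖ := by positivity
  calc (‖latticePt ω₁ ω₂ p.1‖^3)⁻¹ ≤ ((c * ‖![p.1.2, p.1.1]‖)^3)⁻¹ := by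
        gcongr
    _ = (c^3)⁻¹ * (‖![p.1.2, p.1.1]‖^3)⁻¹ := by
        rw [mul_pow, mul_inv]

variable {r : ℝ}

lemma term_bound (hr : 0 < r) (hmin : ∀ p : ℤ × ℤ, p ≠ 0 → r ≤ ‖latticePt ω₁ ω₂ p‖)
    (j : ℕ) (p : {p : ℤ × ℤ // p ≠ 0}) :
    ‖((latticePt ω₁ ω₂ p.1)^(j+3))⁻¹‖ ≤ (r^j)⁻¹ * (‖latticePt ω₁ ω₂ p.1‖^3)⁻¹ := by
  have h1 : r ≤ ‖latticePt ω₁ ω₂ p.1‖ := hmin p.1 p.2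
  have h0 : 0 < ‖latticePt ω₁ ω₂ p.1‖ := lt_of_lt_of_le hr h1
  rw [norm_inv, norm_pow, pow_add, mul_inv]
  gcongr

lemma summable_inv_pow (hω : 0 < (ω₂ / ω₁).im) (hr : 0 < r)
    (hmin : ∀ p : ℤ × ℤ, p ≠ 0 → r ≤ ‖latticePt ω₁ ω₂ p‖) (j : ℕ) :
    Summable fun p : {p : ℤ × ℤ // p ≠ 0} => ‖((latticePt ω₁ ω₂ p.1)^(j+3))⁻¹‖ :=
  Summable.of_nonneg_of_le (fun _ => norm_nonneg _) (term_bound ω₁ ω₂ hr hmin j)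
    (((summable_cube ω₁ ω₂ hω).mul_left (r^j)⁻¹))

lemma sig_norm_le (hω : 0 < (ω₂ / ω₁).im) (hr : 0 < r)
    (hmin : ∀ p : ℤ × ℤ, p ≠ 0 → r ≤ ‖latticePt ω₁ ω₂ p‖) (j : ℕ) :
    ‖sig ω₁ ω₂ (j+3)‖ ≤ (r^j)⁻¹ * ∑' p : {p : ℤ × ℤ // p ≠ 0}, (‖latticePt ω₁ ω₂ p.1‖^3)⁻¹ := by
  have h1 := norm_tsum_le_tsum_norm (summable_inv_pow ω₁ ω₂ hω hr hmin j)
  refine h1.trans ?_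
  rw [← tsum_mul_left]
  exact Summable.tsum_le_tsum (term_bound ω₁ ω₂ hr hmin j) (summable_inv_pow ω₁ ω₂ hω hr hmin j)
    ((summable_cube ω₁ ω₂ hω).mul_left (r^j)⁻¹)

lemma ac_norm_le (hω : 0 < (ω₂ / ω₁).im) (hr : 0 < r)
    (hmin : ∀ p : ℤ × ℤ, p ≠ 0 → r ≤ ‖latticePt ω₁ ω₂ p‖) (m : ℕ) :
    ‖ac ω₁ ω₂ m‖ ≤ ((∑' p : {p : ℤ × ℤ // p ≠ 0}, (‖latticePt ω₁ ω₂ p.1‖^3)⁻¹) * r^2) * (r^m)⁻¹ := by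
  have hS : (0:ℝ) ≤ ∑' p : {p : ℤ × ℤ // p ≠ 0}, (‖latticePt ω₁ ω₂ p.1‖^3)⁻¹ :=
    tsum_nonneg fun p => by positivity
  by_cases hm : 2 ≤ m
  · obtain ⟨k, rfl⟩ : ∃ k, m = k + 2 := ⟨m - 2, by omega⟩
    rw [ac, if_pos hm]
    have heq : (k+2)+1 = k+3 := rfl
    rw [heq]
    refine (sig_norm_le ω₁ ω₂ hω hr hmin k).trans (le_of_eq ?_)
    have hr' : r ≠ 0 := ne_of_gt hr
    have hid : ∀ T : ℝ, (r^k)⁻¹ * T = (T * r^2) * (r^(k+2))⁻¹ := by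
      intro T
      field_simp
      ring
    exact hid _
  · rw [ac, if_neg hm, norm_zero]
    positivity

lemma hasSum_term (hr : 0 < r) (hmin : ∀ p : ℤ × ℤ, p ≠ 0 → r ≤ ‖latticePt ω₁ ω₂ p‖)
    {z : ℂ} (hz : ‖z‖ < r) (p : {p : ℤ × ℤ // p ≠ 0}) :
    HasSum (fun j : ℕ => z^(j+2) * ((latticePt ω₁ ω₂ p.1)^(j+3))⁻¹)
      (-(1/(z - latticePt ω₁ ω₂ p.1) + 1/latticePt ω₁ ω₂ p.1 + z/(latticePt ω₁ ω₂ p.1)^2)) := by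
  set P := latticePt ω₁ ω₂ p.1 with hPdef
  have hrP : r ≤ ‖P‖ := hmin p.1 p.2
  have hP0 : P ≠ 0 := by
    intro h
    rw [h, norm_zero] at hrP
    linarith
  have hPpos : (0:ℝ) < ‖P‖ := lt_of_lt_of_le hr hrP
  have hq : ‖z / P‖ < 1 := by
    rw [norm_div, div_lt_one hPpos]
    linarith
  have hzP : z - P ≠ 0 := by
    intro h
    rw [sub_eq_zero] at h
    rw [h] at hz
    linarith
  have h1 : HasSum (fun j : ℕ => (z/P)^j * P⁻¹) ((1 - z/P)⁻¹ * P⁻¹) :=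
    (hasSum_geometric_of_norm_lt_one hq).mul_right _
  have h2 : HasSum (fun j : ℕ => (z/P)^(j+2) * P⁻¹)
      ((1 - z/P)⁻¹ * P⁻¹ - ∑ i ∈ Finset.range 2, (z/P)^i * P⁻¹) := by
    refine (hasSum_nat_add_iff (f := fun i : ℕ => (z/P)^i * P⁻¹) 2).mpr ?_
    rwa [sub_add_cancel]
  have h3 : (fun j : ℕ => z^(j+2) * (P^(j+3))⁻¹)
      = fun j : ℕ => (z/P)^(j+2) * P⁻¹ := by
    funext j
    rw [div_pow, show j+3 = (j+2)+1 from rfl, pow_succ]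
    field_simp
    ring
  have h4 : (1 - z/P)⁻¹ * P⁻¹ - ∑ i ∈ Finset.range 2, (z/P)^i * P⁻¹
      = -(1/(z - P) + 1/P + z/P^2) := by
    have h5 : (1 : ℂ) - z/P ≠ 0 := by
      rw [sub_ne_zero]
      intro h
      exact hzP (by rw [sub_eq_zero]; exact (div_eq_one_iff_eq hP0).mp h.symm)
    have hPz : P - z ≠ 0 := sub_ne_zero.mpr (Ne.symm (sub_ne_zero.mp hzP))
    norm_num [Finset.sum_range_succ]
    field_simp
    ring
  rw [h3, ← h4]
  exact h2

set_option maxHeartbeats 1000000 in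
lemma expansion (hω : 0 < (ω₂ / ω₁).im) (hr : 0 < r)
    (hmin : ∀ p : ℤ × ℤ, p ≠ 0 → r ≤ ‖latticePt ω₁ ω₂ p‖)
    {z : ℂ} (hz : ‖z‖ < r) :
    wzeta ω₁ ω₂ z = 1/z - ∑' m : ℕ, ac ω₁ ω₂ m * z^m := by
  have hq0 : (0:ℝ) ≤ ‖z‖ / r := by positivity
  have hq1 : ‖z‖ / r < 1 := (div_lt_one hr).mpr hz
  have hcube := summable_cube ω₁ ω₂ hω
  have hFnorm : ∀ q : {p : ℤ × ℤ // p ≠ 0} × ℕ,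
      ‖z^(q.2+2) * ((latticePt ω₁ ω₂ q.1.1)^(q.2+3))⁻¹‖
        ≤ (‖latticePt ω₁ ω₂ q.1.1‖^3)⁻¹ * (‖z‖^2 * (‖z‖/r)^q.2) := by
    rintro ⟨p, j⟩
    rw [norm_mul, norm_pow]
    calc ‖z‖^(j+2) * ‖((latticePt ω₁ ω₂ p.1)^(j+3))⁻¹‖
        ≤ ‖z‖^(j+2) * ((r^j)⁻¹ * (‖latticePt ω₁ ω₂ p.1‖^3)⁻¹) := by
          gcongr
          exact term_bound ω₁ ω₂ hr hmin j p
      _ = (‖latticePt ω₁ ω₂ p.1‖^3)⁻¹ * (‖z‖^2 * (‖z‖/r)^j) := by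
          rw [div_pow, pow_add]
          have hr' : r ≠ 0 := ne_of_gt hr
          field_simp
  have hbound : Summable fun q : {p : ℤ × ℤ // p ≠ 0} × ℕ =>
      (‖latticePt ω₁ ω₂ q.1.1‖^3)⁻¹ * (‖z‖^2 * (‖z‖/r)^q.2) :=
    hcube.mul_of_nonneg ((summable_geometric_of_lt_one hq0 hq1).mul_left _)
      (fun p => by positivity) (fun j => by positivity)
  have hFsum : Summable fun q : {p : ℤ × ℤ // p ≠ 0} × ℕ =>
      z^(q.2+2) * ((latticePt ω₁ ω₂ q.1.1)^(q.2+3))⁻¹ :=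
    Summable.of_norm (Summable.of_nonneg_of_le (fun _ => norm_nonneg _) hFnorm hbound)
  have hslice1 : ∀ p : {p : ℤ × ℤ // p ≠ 0},
      Summable fun j : ℕ => z^(j+2) * ((latticePt ω₁ ω₂ p.1)^(j+3))⁻¹ :=
    fun p => (hasSum_term ω₁ ω₂ hr hmin hz p).summable
  have hslice2 : ∀ j : ℕ, Summable fun p : {p : ℤ × ℤ // p ≠ 0} =>
      z^(j+2) * ((latticePt ω₁ ω₂ p.1)^(j+3))⁻¹ :=
    fun j => (Summable.of_norm (summable_inv_pow ω₁ ω₂ hω hr hmin j)).mul_left _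
  have h1 : (∑' p : {p : ℤ × ℤ // p ≠ 0},
      (1/(z - latticePt ω₁ ω₂ p.1) + 1/latticePt ω₁ ω₂ p.1 + z/(latticePt ω₁ ω₂ p.1)^2))
      = - ∑' p : {p : ℤ × ℤ // p ≠ 0}, ∑' j : ℕ, z^(j+2) * ((latticePt ω₁ ω₂ p.1)^(j+3))⁻¹ := by
    rw [← tsum_neg]
    refine tsum_congr fun p => ?_
    rw [(hasSum_term ω₁ ω₂ hr hmin hz p).tsum_eq, neg_neg]
  have h2 : (∑' p : {p : ℤ × ℤ // p ≠ 0}, ∑' j : ℕ, z^(j+2) * ((latticePt ω₁ ω₂ p.1)^(j+3))⁻¹)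
      = ∑' j : ℕ, ∑' p : {p : ℤ × ℤ // p ≠ 0}, z^(j+2) * ((latticePt ω₁ ω₂ p.1)^(j+3))⁻¹ :=
    (Summable.tsum_comm' (f := fun (p : {p : ℤ × ℤ // p ≠ 0}) (j : ℕ) =>
      z^(j+2) * ((latticePt ω₁ ω₂ p.1)^(j+3))⁻¹) hFsum hslice1 hslice2).symm
  have h3 : ∀ j : ℕ, (∑' p : {p : ℤ × ℤ // p ≠ 0}, z^(j+2) * ((latticePt ω₁ ω₂ p.1)^(j+3))⁻¹)
      = ac ω₁ ω₂ (j+2) * z^(j+2) := by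
    intro j
    rw [tsum_mul_left, ac, if_pos (by omega : 2 ≤ j+2)]
    rw [show sig ω₁ ω₂ ((j+2)+1)
      = ∑' p : {p : ℤ × ℤ // p ≠ 0}, ((latticePt ω₁ ω₂ p.1)^(j+3))⁻¹ from rfl]
    ring
  have h4 : (∑' m : ℕ, ac ω₁ ω₂ m * z^m) = ∑' j : ℕ, ac ω₁ ω₂ (j+2) * z^(j+2) := by
    refine (Function.Injective.tsum_eq (g := fun j : ℕ => j + 2)
      (fun a b h => by simpa using h) ?_).symm
    intro m hm
    rcases le_or_gt 2 m with h | h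
    · exact ⟨m - 2, by simp; omega⟩
    · exfalso
      apply hm
      show ac ω₁ ω₂ m * z^m = 0
      rw [ac, if_neg (by omega), zero_mul]
  unfold wzeta
  rw [h1, h2, tsum_congr h3, ← h4]
  ring

set_option maxHeartbeats 1600000 in
lemma main_claim (hω : 0 < (ω₂ / ω₁).im) (hr : 0 < r)
    (hmin : ∀ p : ℤ × ℤ, p ≠ 0 → r ≤ ‖latticePt ω₁ ω₂ p‖) (m : ℕ) :
    ∀ z : ℂ, z ≠ 0 → ‖z‖ < r →
      iteratedDeriv m (wzeta ω₁ ω₂) z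
        = ((-1)^m * (Nat.factorial m : ℂ)) * (z^(m+1))⁻¹
          - ∑' j : ℕ, ac ω₁ ω₂ (j+m) * ((Nat.factorial (j+m) : ℂ)/(Nat.factorial j)) * z^j := by
  induction m with
  | zero =>
    intro z hz0 hz
    rw [iteratedDeriv_zero, expansion ω₁ ω₂ hω hr hmin hz]
    have hco : ∀ j : ℕ, ac ω₁ ω₂ (j+0) * ((Nat.factorial (j+0) : ℂ)/(Nat.factorial j)) * z^j
        = ac ω₁ ω₂ j * z^j := by
      intro j
      rw [Nat.add_zero, div_self (Nat.cast_ne_zero.mpr (Nat.factorial_ne_zero j)), mul_one]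
    rw [tsum_congr hco]
    norm_num
  | succ m IH =>
    intro z hz0 hz
    have hz0' : (0:ℝ) ≤ ‖z‖ := norm_nonneg z
    set ρ : ℝ := (‖z‖ + r)/2 with hρdef
    have hzρ : ‖z‖ < ρ := by rw [hρdef]; linarith
    have hρr : ρ < r := by rw [hρdef]; linarith
    have hρ0 : 0 < ρ := lt_of_le_of_lt hz0' hzρ
    set q : ℝ := ρ / r with hqdef
    have hq0 : 0 < q := div_pos hρ0 hr
    have hq1 : q < 1 := (div_lt_one hr).mpr hρr
    set C : ℝ := (∑' p : {p : ℤ × ℤ // p ≠ 0}, (‖latticePt ω₁ ω₂ p.1‖^3)⁻¹) * r^2 with hCdef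
    have hC0 : 0 ≤ C := mul_nonneg (tsum_nonneg fun p => by positivity) (by positivity)
    have hrne : r ≠ 0 := ne_of_gt hr
    have hρne : ρ ≠ 0 := ne_of_gt hρ0
    have hqne : q ≠ 0 := ne_of_gt hq0
    have hu : Summable (fun j : ℕ =>
        (C * (r^m)⁻¹ / ρ) * (((j+m : ℕ):ℝ)^(m+1) * q^j)) := by
      apply Summable.mul_left
      have h1 : Summable (fun n : ℕ => (n:ℝ)^(m+1) * q^n) :=
        summable_pow_mul_geometric_of_norm_lt_one (m+1)
          (by rw [Real.norm_eq_abs, abs_of_pos hq0]; exact hq1)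
      have h2 : Summable (fun j : ℕ => ((j+m : ℕ):ℝ)^(m+1) * q^(j+m)) :=
        h1.comp_injective (add_left_injective m)
      refine (h2.mul_left (q^m)⁻¹).congr fun j => ?_
      rw [pow_add]
      field_simp
      ring
    have hgderiv : ∀ (j : ℕ) (w : ℂ), w ∈ Metric.ball (0:ℂ) ρ →
        HasDerivAt (fun w : ℂ =>
            ac ω₁ ω₂ (j+m) * ((Nat.factorial (j+m) : ℂ)/(Nat.factorial j)) * w^j)
          (ac ω₁ ω₂ (j+m) * ((Nat.factorial (j+m) : ℂ)/(Nat.factorial j)) * ((j:ℂ) * w^(j-1))) w :=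
      fun j w _ => (hasDerivAt_pow j w).const_mul _
    have hbound : ∀ (j : ℕ) (w : ℂ), w ∈ Metric.ball (0:ℂ) ρ →
        ‖ac ω₁ ω₂ (j+m) * ((Nat.factorial (j+m) : ℂ)/(Nat.factorial j)) * ((j:ℂ) * w^(j-1))‖
          ≤ (C * (r^m)⁻¹ / ρ) * (((j+m : ℕ):ℝ)^(m+1) * q^j) := by
      intro j w hw
      have hwρ : ‖w‖ ≤ ρ := by
        rw [Metric.mem_ball, dist_zero_right] at hw
        exact le_of_lt hw
      match j with
      | 0 =>
        simp only [Nat.cast_zero, zero_mul, mul_zero, norm_zero]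
        refine mul_nonneg (div_nonneg (mul_nonneg hC0 (by positivity)) (le_of_lt hρ0)) ?_
        exact mul_nonneg (pow_nonneg (Nat.cast_nonneg _) _) (pow_nonneg (le_of_lt hq0) _)
      | (j+1) =>
        simp only [norm_mul, norm_pow, Nat.add_sub_cancel, Complex.norm_natCast]
        have hA : ‖ac ω₁ ω₂ (j+1+m)‖ ≤ C * (r^(j+1+m))⁻¹ := ac_norm_le ω₁ ω₂ hω hr hmin (j+1+m)
        have hB : ‖((Nat.factorial (j+1+m) : ℂ)/(Nat.factorial (j+1)))‖
            ≤ ((j+1+m : ℕ):ℝ)^m := by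
          rw [norm_div, Complex.norm_natCast, Complex.norm_natCast,
            div_le_iff₀ (by positivity)]
          have hd : (Nat.factorial (j+1+m) : ℝ)
              = ((j+1+m).descFactorial m : ℝ) * (Nat.factorial (j+1) : ℝ) := by
            rw [← Nat.cast_mul]
            congr 1
            rw [mul_comm]
            have h := Nat.factorial_mul_descFactorial (n := j+1+m) (k := m) (by omega)
            rw [show j+1+m-m = j+1 by omega] at h
            exact h.symm
          rw [hd]
          have hdle : ((j+1+m).descFactorial m : ℝ) ≤ ((j+1+m : ℕ):ℝ)^m := by
            exact_mod_cast Nat.descFactorial_le_pow _ _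
          exact mul_le_mul_of_nonneg_right hdle (Nat.cast_nonneg _)
        have hwj : ‖w‖^j ≤ ρ^j := pow_le_pow_left₀ (norm_nonneg w) hwρ j
        have h1 : ‖ac ω₁ ω₂ (j+1+m)‖ * ‖((Nat.factorial (j+1+m) : ℂ)/(Nat.factorial (j+1)))‖
            ≤ (C * (r^(j+1+m))⁻¹) * ((j+1+m : ℕ):ℝ)^m :=
          mul_le_mul hA hB (norm_nonneg _) (le_trans (norm_nonneg _) hA)
        have h2 : ((j+1 : ℕ):ℝ) * ‖w‖^j ≤ ((j+1 : ℕ):ℝ) * ρ^j :=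
          mul_le_mul_of_nonneg_left hwj (Nat.cast_nonneg _)
        have h3 := mul_le_mul h1 h2
          (mul_nonneg (Nat.cast_nonneg _) (pow_nonneg (norm_nonneg _) _))
          (le_trans (mul_nonneg (norm_nonneg _) (norm_nonneg _)) h1)
        refine h3.trans ?_
        have h4 : ((j+1+m : ℕ):ℝ)^m * ((j+1 : ℕ):ℝ) ≤ ((j+1+m : ℕ):ℝ)^(m+1) := by
          rw [pow_succ]
          exact mul_le_mul_of_nonneg_left (Nat.cast_le.mpr (by omega))
            (pow_nonneg (Nat.cast_nonneg _) m)
        have hnn : (0:ℝ) ≤ C * (r^(j+1+m))⁻¹ * ρ^j :=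
          mul_nonneg (mul_nonneg hC0 (inv_nonneg.mpr (pow_nonneg hr.le _)))
            (pow_nonneg hρ0.le _)
        calc (C * (r^(j+1+m))⁻¹) * ((j+1+m : ℕ):ℝ)^m * (((j+1 : ℕ):ℝ) * ρ^j)
            = (C * (r^(j+1+m))⁻¹ * ρ^j) * (((j+1+m : ℕ):ℝ)^m * ((j+1 : ℕ):ℝ)) := by ring
          _ ≤ (C * (r^(j+1+m))⁻¹ * ρ^j) * ((j+1+m : ℕ):ℝ)^(m+1) :=
              mul_le_mul_of_nonneg_left h4 hnn
          _ = (C * (r^m)⁻¹ / ρ) * (((j+1+m : ℕ):ℝ)^(m+1) * q^(j+1)) := by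
              have halg : ∀ (c x ρ' : ℝ), ρ' ≠ 0 →
                  c * (r^(j+1+m))⁻¹ * ρ'^j * x
                    = (c * (r^m)⁻¹ / ρ') * (x * (ρ'/r)^(j+1)) := by
                intro c x ρ' hρ'
                rw [div_pow, pow_add, pow_succ ρ' j]
                field_simp
              rw [hqdef]
              exact halg C (((j+1+m : ℕ):ℝ)^(m+1)) ρ hρne
    have hball : z ∈ Metric.ball (0:ℂ) ρ := by
      rw [Metric.mem_ball, dist_zero_right]
      exact hzρ
    have h0ball : (0:ℂ) ∈ Metric.ball (0:ℂ) ρ := Metric.mem_ball_self hρ0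
    have hg0 : Summable (fun j : ℕ =>
        ac ω₁ ω₂ (j+m) * ((Nat.factorial (j+m) : ℂ)/(Nat.factorial j)) * (0:ℂ)^j) := by
      apply summable_of_ne_finset_zero (s := {0})
      intro j hj
      rw [Finset.mem_singleton] at hj
      rw [zero_pow hj, mul_zero]
    have HD2 : HasDerivAt (fun w : ℂ => ∑' j : ℕ,
          ac ω₁ ω₂ (j+m) * ((Nat.factorial (j+m) : ℂ)/(Nat.factorial j)) * w^j)
        (∑' j : ℕ,
          ac ω₁ ω₂ (j+m) * ((Nat.factorial (j+m) : ℂ)/(Nat.factorial j)) * ((j:ℂ) * z^(j-1))) z :=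
      hasDerivAt_tsum_of_isPreconnected hu Metric.isOpen_ball
        (convex_ball (0:ℂ) ρ).isPreconnected hgderiv hbound h0ball hg0 hball
    have HD1 : HasDerivAt (fun w : ℂ => ((-1)^m * (Nat.factorial m : ℂ)) * (w^(m+1))⁻¹)
        (((-1)^(m+1) * (Nat.factorial (m+1) : ℂ)) * (z^(m+1+1))⁻¹) z := by
      have h := (hasDerivAt_zpow (-(m+1) : ℤ) z (Or.inl hz0)).const_mul
        ((-1)^m * (Nat.factorial m : ℂ))
      have hfun : (fun w : ℂ => ((-1)^m * (Nat.factorial m : ℂ)) * w^(-(m+1:ℕ) : ℤ))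
          = fun w : ℂ => ((-1)^m * (Nat.factorial m : ℂ)) * (w^(m+1))⁻¹ := by
        funext w
        rw [zpow_neg, zpow_natCast]
      rw [show (-(m+1) : ℤ) = (-(m+1:ℕ) : ℤ) by push_cast; ring] at h
      rw [hfun] at h
      refine h.congr_deriv ?_
      rw [show ((-(m+1:ℕ) : ℤ)) - 1 = -((m+2 : ℕ) : ℤ) by push_cast; ring,
        zpow_neg, zpow_natCast]
      push_cast [Nat.factorial_succ]
      ring
    have hopen : IsOpen (Metric.ball (0:ℂ) r \ {0}) :=
      Metric.isOpen_ball.sdiff isClosed_singleton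
    have hmemU : z ∈ Metric.ball (0:ℂ) r \ {0} := by
      constructor
      · rw [Metric.mem_ball, dist_zero_right]
        exact hz
      · simpa using hz0
    have hEq : Set.EqOn (iteratedDeriv m (wzeta ω₁ ω₂))
        (fun w : ℂ => ((-1)^m * (Nat.factorial m : ℂ)) * (w^(m+1))⁻¹
          - ∑' j : ℕ, ac ω₁ ω₂ (j+m) * ((Nat.factorial (j+m) : ℂ)/(Nat.factorial j)) * w^j)
        (Metric.ball (0:ℂ) r \ {0}) := by
      intro w hw
      have hw1 : ‖w‖ < r := by
        have := hw.1
        rwa [Metric.mem_ball, dist_zero_right] at this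
      have hw2 : w ≠ 0 := by simpa using hw.2
      exact IH w hw2 hw1
    rw [iteratedDeriv_succ,
      Filter.EventuallyEq.deriv_eq (Filter.eventuallyEq_of_mem (hopen.mem_nhds hmemU) hEq),
      HasDerivAt.deriv (f := fun w => ((-1)^m * (Nat.factorial m : ℂ)) * (w^(m+1))⁻¹
        - ∑' j : ℕ, ac ω₁ ω₂ (j+m) * ((Nat.factorial (j+m) : ℂ)/(Nat.factorial j)) * w^j) (HD1.sub HD2)]
    congr 1
    have hinj : Function.Injective (fun j : ℕ => j + 1) := fun a b h => by simpa using h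
    have hsupp : Function.support (fun j : ℕ =>
        ac ω₁ ω₂ (j+m) * ((Nat.factorial (j+m) : ℂ)/(Nat.factorial j)) * ((j:ℂ) * z^(j-1)))
        ⊆ Set.range (fun j : ℕ => j + 1) := by
      intro j hj
      match j with
      | 0 =>
        exfalso
        apply hj
        show ac ω₁ ω₂ (0+m) * ((Nat.factorial (0+m) : ℂ)/(Nat.factorial 0)) * (((0:ℕ):ℂ) * z^(0-1)) = 0
        rw [Nat.cast_zero, zero_mul, mul_zero]
      | (j+1) => exact ⟨j, rfl⟩
    rw [← Function.Injective.tsum_eq hinj hsupp]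
    refine tsum_congr fun j => ?_
    show ac ω₁ ω₂ (j+1+m) * ((Nat.factorial (j+1+m) : ℂ)/(Nat.factorial (j+1)))
        * (((j+1:ℕ):ℂ) * z^(j+1-1))
      = ac ω₁ ω₂ (j+(m+1)) * ((Nat.factorial (j+(m+1)) : ℂ)/(Nat.factorial j)) * z^j
    have hidx : j+1+m = j+(m+1) := by omega
    rw [Nat.add_sub_cancel, hidx]
    have hfj : ((Nat.factorial j : ℂ)) ≠ 0 := Nat.cast_ne_zero.mpr (Nat.factorial_ne_zero j)
    have hcoef : ((Nat.factorial (j+(m+1)) : ℂ)/(Nat.factorial (j+1))) * ((j+1:ℕ):ℂ)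
        = (Nat.factorial (j+(m+1)) : ℂ)/(Nat.factorial j) := by
      rw [Nat.factorial_succ]
      push_cast
      have hj1 : ((j:ℂ)+1) ≠ 0 := by
        have := Nat.cast_add_one_ne_zero (R := ℂ) j
        exact_mod_cast this
      field_simp
    calc ac ω₁ ω₂ (j+(m+1)) * ((Nat.factorial (j+(m+1)) : ℂ)/(Nat.factorial (j+1)))
        * (((j+1:ℕ):ℂ) * z^j)
        = ac ω₁ ω₂ (j+(m+1))
          * (((Nat.factorial (j+(m+1)) : ℂ)/(Nat.factorial (j+1))) * ((j+1:ℕ):ℂ)) * z^j := by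
          ring
      _ = ac ω₁ ω₂ (j+(m+1)) * ((Nat.factorial (j+(m+1)) : ℂ)/(Nat.factorial j)) * z^j := by
          rw [hcoef]

end Stmt14Aux

theorem stmt14 (ω₁ ω₂ : ℂ) (hω : 0 < (ω₂ / ω₁).im)
    (r : ℝ) (hr : 0 < r) (hmin : ∀ p : ℤ × ℤ, p ≠ 0 → r ≤ ‖latticePt ω₁ ω₂ p‖)
    (s : ℕ → ℂ) (hs1 : s 1 = 0)
    (hs : ∀ j : ℕ, 2 ≤ j →
      s j = ∑' p : {p : ℤ × ℤ // p ≠ 0}, ((latticePt ω₁ ω₂ p.1)^(2*j))⁻¹)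
    (z : ℂ) (hz0 : z ≠ 0) (hz : ‖z‖ < r) :
    wzeta ω₁ ω₂ z = 1/z - ∑' k : ℕ, s (k+2) * z^(2*(k+1)+1) ∧
    ∀ n : ℕ, iteratedDeriv (2*n) (wzeta ω₁ ω₂) z
      = (Nat.factorial (2*n) : ℂ)/z^(2*n+1)
        - ∑' k : ℕ, s (n+k+1) *
            ((Nat.factorial (2*n+2*k+1) : ℂ)/(Nat.factorial (2*k+1))) * z^(2*k+1) := by
  constructor
  · rw [Stmt14Aux.expansion ω₁ ω₂ hω hr hmin hz]
    congr 1
    have hinj : Function.Injective (fun k : ℕ => 2*k+3) := by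
      intro a b h
      have h' : 2*a+3 = 2*b+3 := h
      omega
    have hsupp : Function.support (fun m : ℕ => Stmt14Aux.ac ω₁ ω₂ m * z^m)
        ⊆ Set.range (fun k : ℕ => 2*k+3) := by
      intro m hm
      have hac : Stmt14Aux.ac ω₁ ω₂ m ≠ 0 := by
        intro h
        apply hm
        show Stmt14Aux.ac ω₁ ω₂ m * z^m = 0
        rw [h, zero_mul]
      have h2 : 2 ≤ m := by
        by_contra h
        exact hac (by rw [Stmt14Aux.ac, if_neg h])
      have hodd : ¬ Odd (m+1) := by
        intro ho
        exact hac (by rw [Stmt14Aux.ac, if_pos h2, Stmt14Aux.sig_odd ω₁ ω₂ ho])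
      have hmodd : Odd m := by
        rcases Nat.even_or_odd m with he | ho
        · exfalso
          apply hodd
          rcases he with ⟨t, ht⟩
          exact ⟨t, by omega⟩
        · exact ho
      obtain ⟨t, ht⟩ := hmodd
      refine ⟨t - 1, ?_⟩
      show 2*(t-1)+3 = m
      omega
    rw [← Function.Injective.tsum_eq hinj hsupp]
    refine tsum_congr fun k => ?_
    show Stmt14Aux.ac ω₁ ω₂ (2*k+3) * z^(2*k+3) = s (k+2) * z^(2*(k+1)+1)
    have h1 : Stmt14Aux.ac ω₁ ω₂ (2*k+3) = s (k+2) := by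
      rw [Stmt14Aux.ac, if_pos (by omega : 2 ≤ 2*k+3),
        show 2*k+3+1 = 2*(k+2) by omega, hs (k+2) (by omega)]
      rfl
    rw [h1, show 2*(k+1)+1 = 2*k+3 by omega]
  · intro n
    rw [Stmt14Aux.main_claim ω₁ ω₂ hω hr hmin (2*n) z hz0 hz]
    have hpow : ((-1:ℂ))^(2*n) = 1 := by
      rw [pow_mul]
      norm_num
    rw [hpow, one_mul, ← div_eq_mul_inv]
    congr 1
    have hinj : Function.Injective (fun k : ℕ => 2*k+1) := by
      intro a b h
      have h' : 2*a+1 = 2*b+1 := h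
      omega
    have hsupp : Function.support (fun j : ℕ =>
        Stmt14Aux.ac ω₁ ω₂ (j+2*n) * ((Nat.factorial (j+2*n) : ℂ)/(Nat.factorial j)) * z^j)
        ⊆ Set.range (fun k : ℕ => 2*k+1) := by
      intro j hj
      have hac : Stmt14Aux.ac ω₁ ω₂ (j+2*n) ≠ 0 := by
        intro h
        apply hj
        show Stmt14Aux.ac ω₁ ω₂ (j+2*n) * ((Nat.factorial (j+2*n) : ℂ)/(Nat.factorial j)) * z^j = 0
        rw [h, zero_mul, zero_mul]
      have h2 : 2 ≤ j+2*n := by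
        by_contra h
        exact hac (by rw [Stmt14Aux.ac, if_neg h])
      have hodd : ¬ Odd (j+2*n+1) := by
        intro ho
        exact hac (by rw [Stmt14Aux.ac, if_pos h2, Stmt14Aux.sig_odd ω₁ ω₂ ho])
      have hjodd : Odd j := by
        rcases Nat.even_or_odd j with he | ho
        · exfalso
          apply hodd
          rcases he with ⟨t, ht⟩
          exact ⟨t+n, by omega⟩
        · exact ho
      obtain ⟨t, ht⟩ := hjodd
      refine ⟨t, ?_⟩
      show 2*t+1 = j
      omega
    rw [← Function.Injective.tsum_eq hinj hsupp]
    refine tsum_congr fun k => ?_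
    show Stmt14Aux.ac ω₁ ω₂ (2*k+1+2*n)
        * ((Nat.factorial (2*k+1+2*n) : ℂ)/(Nat.factorial (2*k+1))) * z^(2*k+1)
      = s (n+k+1) * ((Nat.factorial (2*n+2*k+1) : ℂ)/(Nat.factorial (2*k+1))) * z^(2*k+1)
    rw [show 2*k+1+2*n = 2*n+2*k+1 by omega]
    congr 2
    by_cases hnk : n + k = 0
    · have hn : n = 0 := by omega
      have hk : k = 0 := by omega
      subst hn
      subst hk
      rw [Stmt14Aux.ac, if_neg (by norm_num)]
      simpa using hs1.symm
    · rw [Stmt14Aux.ac, if_pos (by omega), show 2*n+2*k+1+1 = 2*(n+k+1) by omega,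
        hs (n+k+1) (by omega)]
      rfl
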